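/- arXiv:2312.04952 — 3 statements merged into one kernel-verified Lean document; each statement's English description precedes it below -/
import Mathlib

section
/- The mean distance of the equilateral m-star of total length L equals ρ(S_m) = (L/m²)(m − 2/3). -/
open MeasureTheory intervalIntegral

/-- The mean distance of the equilateral `m`-star of total length `L` equals
`(L/m²)(m − 2/3)`. -/
theorem mean_distance_star (m : ℕ) (hm : 1 ≤ m) (L ℓ : ℝ)
    (hL : 0 < L) (hℓ : ℓ = L / m) :
    ((m : ℝ) / L) *
        (∫ x in (0:ℝ)..ℓ, (x ^ 2 / L + (((m : ℝ) - 2) / m) * x + L / (2 * m))) =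
      (L / (m : ℝ) ^ 2) * ((m : ℝ) - 2 / 3) := by
  have hm0 : (m : ℝ) ≠ 0 := by positivity
  have hL0 : L ≠ 0 := ne_of_gt hL
  have h : (∫ x in (0:ℝ)..ℓ, (x ^ 2 / L + (((m : ℝ) - 2) / m) * x + L / (2 * m)))
      = ℓ ^ 3 / (3 * L) + (((m : ℝ) - 2) / m) * (ℓ ^ 2 / 2) + L / (2 * m) * ℓ := by
    have h1 : (∫ x in (0:ℝ)..ℓ, x ^ 2 / L) = ℓ ^ 3 / (3 * L) := by
      rw [intervalIntegral.integral_div, integral_pow]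
      ring
    have h2 : (∫ x in (0:ℝ)..ℓ, (((m : ℝ) - 2) / m) * x) = (((m : ℝ) - 2) / m) * (ℓ ^ 2 / 2) := by
      rw [intervalIntegral.integral_const_mul, integral_id]
      ring
    have h3 : (∫ x in (0:ℝ)..ℓ, (L / (2 * m) : ℝ)) = L / (2 * m) * ℓ := by
      simp; ring
    rw [show (fun x : ℝ => x ^ 2 / L + (((m : ℝ) - 2) / m) * x + L / (2 * m))
        = fun x : ℝ => (x ^ 2 / L + (((m : ℝ) - 2) / m) * x) + L / (2 * m) from rfl,
      intervalIntegral.integral_add, intervalIntegral.integral_add, h1, h2, h3]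
    · exact (intervalIntegrable_pow 2).div_const L
    · exact (intervalIntegrable_id).const_mul _
    · exact ((intervalIntegrable_pow 2).div_const L).add ((intervalIntegrable_id).const_mul _)
    · exact intervalIntegrable_const
  rw [h, hℓ]
  field_simp
  ring
end

section
/- The mean distance of the equilateral flower graph F_m with m ≥ 1 petals and total length L > 0 equals ρ(F_m) = (L/(4m))·((2m−1)/m). -/
open MeasureTheory intervalIntegral

lemma ilin (c d A B : ℝ) : ∫ y in c..d, (A + B * y) = A * (d - c) + B * (d ^ 2 - c ^ 2) / 2 := by
  rw [intervalIntegral.integral_add intervalIntegrable_const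
      (intervalIntegrable_id.const_mul B), intervalIntegral.integral_const_mul,
      integral_id, intervalIntegral.integral_const]
  simp [smul_eq_mul]; ring

lemma piece (c d A B : ℝ) (f : ℝ → ℝ)
    (h : ∀ y, c ≤ y → y ≤ d → f y = A + B * y) (hcd : c ≤ d) :
    ∫ y in c..d, f y = A * (d - c) + B * (d ^ 2 - c ^ 2) / 2 := by
  rw [intervalIntegral.integral_congr (g := fun y => A + B * y)
    (fun y hy => by rw [Set.uIcc_of_le hcd] at hy; exact h y hy.1 hy.2), ilin]

lemma inner_min (ℓ x : ℝ) (hℓ : 0 ≤ ℓ) (hx1 : -(ℓ/2) ≤ x) (hx2 : x ≤ ℓ/2) :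
    ∫ y in (-(ℓ/2))..(ℓ/2), min |x - y| (ℓ - |x - y|) = ℓ^2/4 := by
  have hc : Continuous fun y : ℝ => min |x - y| (ℓ - |x - y|) := by fun_prop
  rcases le_or_gt 0 x with hx | hx
  · have e1 : (∫ y in (-(ℓ/2))..(x - ℓ/2), min |x - y| (ℓ - |x - y|))
        = (ℓ - x) * ((x - ℓ/2) - (-(ℓ/2))) + 1 * ((x - ℓ/2) ^ 2 - (-(ℓ/2)) ^ 2) / 2 := by
      refine piece _ _ _ _ _ (fun y h1 h2 => ?_) (by linarith)
      rw [abs_of_nonneg (by linarith), min_eq_right (by linarith)]; ring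
    have e2 : (∫ y in (x - ℓ/2)..x, min |x - y| (ℓ - |x - y|))
        = x * (x - (x - ℓ/2)) + (-1) * (x ^ 2 - (x - ℓ/2) ^ 2) / 2 := by
      refine piece _ _ _ _ _ (fun y h1 h2 => ?_) (by linarith)
      rw [abs_of_nonneg (by linarith), min_eq_left (by linarith)]; ring
    have e3 : (∫ y in x..(ℓ/2), min |x - y| (ℓ - |x - y|))
        = (-x) * (ℓ/2 - x) + 1 * ((ℓ/2) ^ 2 - x ^ 2) / 2 := by
      refine piece _ _ _ _ _ (fun y h1 h2 => ?_) (by linarith)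
      rw [abs_of_nonpos (by linarith), min_eq_left (by linarith)]; ring
    rw [← integral_add_adjacent_intervals (a := -(ℓ/2)) (b := x - ℓ/2) (c := ℓ/2)
      (hc.intervalIntegrable _ _) (hc.intervalIntegrable _ _),
      ← integral_add_adjacent_intervals (a := x - ℓ/2) (b := x) (c := ℓ/2)
      (hc.intervalIntegrable _ _) (hc.intervalIntegrable _ _), e1, e2, e3]
    ring
  · have e1 : (∫ y in (-(ℓ/2))..x, min |x - y| (ℓ - |x - y|))
        = x * (x - (-(ℓ/2))) + (-1) * (x ^ 2 - (-(ℓ/2)) ^ 2) / 2 := by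
      refine piece _ _ _ _ _ (fun y h1 h2 => ?_) (by linarith)
      rw [abs_of_nonneg (by linarith), min_eq_left (by linarith)]; ring
    have e2 : (∫ y in x..(x + ℓ/2), min |x - y| (ℓ - |x - y|))
        = (-x) * ((x + ℓ/2) - x) + 1 * ((x + ℓ/2) ^ 2 - x ^ 2) / 2 := by
      refine piece _ _ _ _ _ (fun y h1 h2 => ?_) (by linarith)
      rw [abs_of_nonpos (by linarith), min_eq_left (by linarith)]; ring
    have e3 : (∫ y in (x + ℓ/2)..(ℓ/2), min |x - y| (ℓ - |x - y|))
        = (ℓ + x) * (ℓ/2 - (x + ℓ/2)) + (-1) * ((ℓ/2) ^ 2 - (x + ℓ/2) ^ 2) / 2 := by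
      refine piece _ _ _ _ _ (fun y h1 h2 => ?_) (by linarith)
      rw [abs_of_nonpos (by linarith), min_eq_right (by linarith)]; ring
    rw [← integral_add_adjacent_intervals (a := -(ℓ/2)) (b := x) (c := ℓ/2)
      (hc.intervalIntegrable _ _) (hc.intervalIntegrable _ _),
      ← integral_add_adjacent_intervals (a := x) (b := x + ℓ/2) (c := ℓ/2)
      (hc.intervalIntegrable _ _) (hc.intervalIntegrable _ _), e1, e2, e3]
    ring

lemma iabs (a : ℝ) (ha : 0 ≤ a) : ∫ y in (-a)..a, |y| = a ^ 2 := by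
  have e1 : (∫ y in (-a)..(0:ℝ), |y|)
      = 0 * (0 - (-a)) + (-1) * (0 ^ 2 - (-a) ^ 2) / 2 := by
    refine piece _ _ _ _ _ (fun y h1 h2 => ?_) (by linarith)
    rw [abs_of_nonpos (by linarith)]; ring
  have e2 : (∫ y in (0:ℝ)..a, |y|) = 0 * (a - 0) + 1 * (a ^ 2 - 0 ^ 2) / 2 := by
    refine piece _ _ _ _ _ (fun y h1 h2 => ?_) (by linarith)
    rw [abs_of_nonneg (by linarith)]; ring
  rw [← integral_add_adjacent_intervals (a := -a) (b := 0) (c := a)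
      (continuous_abs.intervalIntegrable _ _) (continuous_abs.intervalIntegrable _ _), e1, e2]
  ring

/-- The mean distance of the equilateral flower `F_m` with `m ≥ 1` petals and total
length `L > 0` equals `(L/(4m))·((2m−1)/m)`.  Each petal is parametrised by
`[−ℓ/2, ℓ/2]` (`ℓ = L/m`), with central vertex `0` and `±ℓ/2` identified; the
same-petal distance is the circle distance `min |x−y| (ℓ − |x−y|)`, and the
cross-petal distance is `|x| + |y|`.  The mean distance is the double average of
the distance over the flower, i.e. `(1/L²)` times the sum over the `m` same-petal
double integrals and the `m(m−1)` cross-petal double integrals. -/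
theorem mean_distance_equilateral_flower (m : ℕ) (hm : 1 ≤ m) (L ℓ : ℝ)
    (hL : 0 < L) (hℓ : ℓ = L / m) :
    (1 / L ^ 2) *
        ((m : ℝ) *
            (∫ x in (-(ℓ / 2))..(ℓ / 2), ∫ y in (-(ℓ / 2))..(ℓ / 2),
              min |x - y| (ℓ - |x - y|)) +
          (m : ℝ) * ((m : ℝ) - 1) *
            (∫ x in (-(ℓ / 2))..(ℓ / 2), ∫ y in (-(ℓ / 2))..(ℓ / 2), (|x| + |y|))) =
      (L / (4 * m)) * ((2 * (m : ℝ) - 1) / m) := by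
  have hm0 : (0:ℝ) < (m : ℝ) := by exact_mod_cast Nat.lt_of_lt_of_le Nat.zero_lt_one hm
  have hℓ0 : 0 < ℓ := by rw [hℓ]; positivity
  have I1 : (∫ x in (-(ℓ / 2))..(ℓ / 2), ∫ y in (-(ℓ / 2))..(ℓ / 2),
      min |x - y| (ℓ - |x - y|)) = ℓ ^ 3 / 4 := by
    rw [intervalIntegral.integral_congr (g := fun _ => ℓ ^ 2 / 4)
      (fun x hx => by
        rw [Set.uIcc_of_le (by linarith)] at hx
        exact inner_min ℓ x hℓ0.le hx.1 hx.2),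
      intervalIntegral.integral_const]
    simp [smul_eq_mul]; ring
  have I2 : (∫ x in (-(ℓ / 2))..(ℓ / 2), ∫ y in (-(ℓ / 2))..(ℓ / 2), (|x| + |y|))
      = ℓ ^ 3 / 2 := by
    have inner : ∀ x : ℝ, (∫ y in (-(ℓ / 2))..(ℓ / 2), (|x| + |y|))
        = ℓ * |x| + ℓ ^ 2 / 4 := by
      intro x
      rw [intervalIntegral.integral_add intervalIntegrable_const
        (continuous_abs.intervalIntegrable _ _), intervalIntegral.integral_const,
        iabs _ (by linarith)]
      simp [smul_eq_mul]; ring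
    rw [intervalIntegral.integral_congr (g := fun x => ℓ * |x| + ℓ ^ 2 / 4)
      (fun x _ => inner x),
      intervalIntegral.integral_add (Continuous.intervalIntegrable (by fun_prop : Continuous fun x : ℝ => ℓ * |x|) _ _)
        intervalIntegrable_const,
      intervalIntegral.integral_const_mul, iabs _ (by linarith),
      intervalIntegral.integral_const]
    simp [smul_eq_mul]; ring
  rw [I1, I2, hℓ]
  field_simp
  ring
end

section
/- Let ℓ₁,…,ℓ_m > 0 with ∑ℓᵢ = L. Define ρ(F) = (1/(4L²)) ∑ᵢ [ℓᵢ³ + ∑_{j≠i} ℓᵢℓⱼ(ℓᵢ+ℓⱼ)] (the mean distance of the flower with petal lengths ℓᵢ). Then ρ(F) ≥ ((2m−1)/(4m²))·L, with equality if and only if ℓ₁ = ⋯ = ℓ_m = L/m. -/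
open Finset

/-- For a flower graph on `m` petals of lengths `ℓ₁,…,ℓ_m > 0` summing to `L`, the
mean distance `ρ(F) = (1/(4L²)) ∑ᵢ [ℓᵢ³ + ∑_{j≠i} ℓᵢℓⱼ(ℓᵢ+ℓⱼ)]` satisfies
`ρ(F) ≥ ((2m−1)/(4m²))·L`, with equality iff the flower is equilateral. -/
theorem flower_mean_distance_lower_bound (m : ℕ) (hm : 0 < m) (L : ℝ) (hL : 0 < L)
    (ℓ : Fin m → ℝ) (hpos : ∀ i, 0 < ℓ i) (hsum : ∑ i, ℓ i = L) :
    ((2 * (m : ℝ) - 1) / (4 * (m : ℝ) ^ 2)) * L ≤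
        (1 / (4 * L ^ 2)) *
          ∑ i, (ℓ i ^ 3 + ∑ j ∈ univ.erase i, ℓ i * ℓ j * (ℓ i + ℓ j)) ∧
      ((1 / (4 * L ^ 2)) *
            (∑ i, (ℓ i ^ 3 + ∑ j ∈ univ.erase i, ℓ i * ℓ j * (ℓ i + ℓ j))) =
          ((2 * (m : ℝ) - 1) / (4 * (m : ℝ) ^ 2)) * L ↔
        ∀ i, ℓ i = L / m) := by
  have hm0 : ((m : ℝ)) ≠ 0 := by positivity
  have hL0 : L ≠ 0 := ne_of_gt hL
  set a : ℝ := L / m with ha_def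
  set Q : ℝ := ∑ i, ℓ i ^ 2 with hQ_def
  set T : ℝ := ∑ i, ℓ i ^ 3 with hT_def
  -- Step 1: the double sum equals 2LQ - T
  have hE : (∑ i, (ℓ i ^ 3 + ∑ j ∈ univ.erase i, ℓ i * ℓ j * (ℓ i + ℓ j)))
      = 2 * L * Q - T := by
    have h1 : ∀ i : Fin m, (ℓ i ^ 3 + ∑ j ∈ univ.erase i, ℓ i * ℓ j * (ℓ i + ℓ j))
        = ℓ i ^ 2 * L + ℓ i * Q - ℓ i ^ 3 := by
      intro i
      have e1 : ∑ j ∈ univ.erase i, ℓ j = L - ℓ i := by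
        rw [Finset.sum_erase_eq_sub (mem_univ i), hsum]
      have e2 : ∑ j ∈ univ.erase i, ℓ j ^ 2 = Q - ℓ i ^ 2 := by
        rw [Finset.sum_erase_eq_sub (mem_univ i), hQ_def]
      have e3 : ∑ j ∈ univ.erase i, ℓ i * ℓ j * (ℓ i + ℓ j)
          = ℓ i ^ 2 * (∑ j ∈ univ.erase i, ℓ j) + ℓ i * (∑ j ∈ univ.erase i, ℓ j ^ 2) := by
        rw [Finset.mul_sum, Finset.mul_sum, ← Finset.sum_add_distrib]
        exact Finset.sum_congr rfl fun j _ => by ring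
      rw [e3, e1, e2]; ring
    rw [Finset.sum_congr rfl fun i _ => h1 i]
    rw [Finset.sum_sub_distrib, Finset.sum_add_distrib, ← Finset.sum_mul, ← Finset.sum_mul,
      hsum, ← hQ_def, ← hT_def]
    ring
  -- Step 2: the deficit identity
  have hD : ∑ i, ((2 * L - 2 * a - ℓ i) * (ℓ i - a) ^ 2)
      = 2 * L * Q - T - ((2 * (m : ℝ) - 1) / (m : ℝ) ^ 2) * L ^ 3 := by
    have h2 : ∀ i : Fin m, (2 * L - 2 * a - ℓ i) * (ℓ i - a) ^ 2
        = -(ℓ i ^ 3) + 2 * L * ℓ i ^ 2 + (3 * a ^ 2 - 4 * a * L) * ℓ i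
          + (2 * a ^ 2 * L - 2 * a ^ 3) := fun i => by ring
    rw [Finset.sum_congr rfl fun i _ => h2 i]
    rw [Finset.sum_add_distrib, Finset.sum_add_distrib, Finset.sum_add_distrib,
      Finset.sum_neg_distrib, ← Finset.mul_sum, ← Finset.mul_sum, hsum,
      Finset.sum_const, Finset.card_univ, Fintype.card_fin, nsmul_eq_mul,
      ← hQ_def, ← hT_def, ha_def]
    field_simp
    ring
  -- Step 3: each term is nonneg, and zero only at ℓ i = a
  have hall : ∀ i, 0 ≤ (2 * L - 2 * a - ℓ i) * (ℓ i - a) ^ 2 ∧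
      ((2 * L - 2 * a - ℓ i) * (ℓ i - a) ^ 2 = 0 → ℓ i = a) := by
    intro i
    rcases Nat.lt_or_ge m 2 with h2 | h2
    · -- m = 1
      have hm1 : m = 1 := by omega
      subst hm1
      have hℓ : ℓ i = L := by
        have : ℓ 0 = L := by simpa using hsum
        rwa [Subsingleton.elim i 0]
      have hia : ℓ i = a := by rw [hℓ, ha_def]; norm_num
      refine ⟨?_, fun _ => hia⟩
      rw [hia, sub_self]
      simp
    · -- m ≥ 2
      have hilt : ℓ i < L := by
        have hne : (univ.erase i).Nonempty := by
          have : Nontrivial (Fin m) := Fin.nontrivial_iff_two_le.mpr h2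
          obtain ⟨j, hj⟩ := exists_ne i
          exact ⟨j, Finset.mem_erase.mpr ⟨hj, mem_univ j⟩⟩
        have hpos' : 0 < ∑ j ∈ univ.erase i, ℓ j :=
          Finset.sum_pos (fun j _ => hpos j) hne
        have : ∑ j ∈ univ.erase i, ℓ j = L - ℓ i := by
          rw [Finset.sum_erase_eq_sub (mem_univ i), hsum]
        linarith [this ▸ hpos']
      have ha2 : 2 * a ≤ L := by
        have h2m : (2:ℝ) ≤ (m:ℝ) := by exact_mod_cast h2
        have hmpos : (0:ℝ) < (m:ℝ) := by positivity
        rw [ha_def, ← mul_div_assoc, div_le_iff₀ hmpos]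
        nlinarith
      have hc : 0 < 2 * L - 2 * a - ℓ i := by linarith
      refine ⟨mul_nonneg hc.le (sq_nonneg _), fun h => ?_⟩
      have := mul_eq_zero.mp h
      rcases this with h' | h'
      · linarith
      · have := pow_eq_zero_iff (n := 2) (by norm_num) |>.mp h'
        linarith [sub_eq_zero.mp this]
  -- Key rearrangement
  have hkey : (1 / (4 * L ^ 2)) *
      (∑ i, (ℓ i ^ 3 + ∑ j ∈ univ.erase i, ℓ i * ℓ j * (ℓ i + ℓ j)))
      = ((2 * (m : ℝ) - 1) / (4 * (m : ℝ) ^ 2)) * L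
        + (∑ i, ((2 * L - 2 * a - ℓ i) * (ℓ i - a) ^ 2)) / (4 * L ^ 2) := by
    rw [hE, hD]
    field_simp
    ring
  have hsn : 0 ≤ ∑ i, ((2 * L - 2 * a - ℓ i) * (ℓ i - a) ^ 2) :=
    Finset.sum_nonneg fun i _ => (hall i).1
  constructor
  · rw [hkey]
    have : 0 ≤ (∑ i, ((2 * L - 2 * a - ℓ i) * (ℓ i - a) ^ 2)) / (4 * L ^ 2) :=
      div_nonneg hsn (by positivity)
    linarith
  · rw [hkey]
    constructor
    · intro h
      have h0 : (∑ i, ((2 * L - 2 * a - ℓ i) * (ℓ i - a) ^ 2)) / (4 * L ^ 2) = 0 := by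
        linarith
      have hs0 : ∑ i, ((2 * L - 2 * a - ℓ i) * (ℓ i - a) ^ 2) = 0 := by
        field_simp at h0
        rw [mul_zero] at h0; rw [← h0]; exact Finset.sum_congr rfl fun i _ => by ring
      rw [Finset.sum_eq_zero_iff_of_nonneg (fun i _ => (hall i).1)] at hs0
      intro i
      exact (hall i).2 (hs0 i (mem_univ i))
    · intro h
      have hz : ∑ i, ((2 * L - 2 * a - ℓ i) * (ℓ i - a) ^ 2) = 0 :=
        Finset.sum_eq_zero fun i _ => by
          rw [h i, sub_self]; ring
      rw [hz]
      simp
end
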